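/- Let β > 0 and p ∈ ℝ. Define φ : (−β, β) → ℝ by φ(v) = 2β ∫₀^v artanh(t/β) dt + p·v. Then v* := −β · tanh(p/(2β)) lies in (−β, β), and for every v ∈ (−β, β) with v ≠ v* one has φ(v*) < φ(v); i.e., φ attains a strict global minimum on (−β, β) uniquely at v* = −β tanh(p/(2β)). -/

import Mathlib

open intervalIntegral

/-- The inverse hyperbolic tangent on (-1, 1). -/
noncomputable def artanh (x : ℝ) : ℝ := Real.log ((1 + x) / (1 - x)) / 2

lemma tanh_mem_Ioo (x : ℝ) : Real.tanh x ∈ Set.Ioo (-1 : ℝ) 1 := by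
  have hc := Real.cosh_pos x
  have h1 : Real.cosh x + Real.sinh x = Real.exp x := Real.cosh_add_sinh x
  have h2 : Real.cosh x - Real.sinh x = Real.exp (-x) := Real.cosh_sub_sinh x
  have he1 := Real.exp_pos x
  have he2 := Real.exp_pos (-x)
  rw [Real.tanh_eq_sinh_div_cosh]
  constructor
  · rw [lt_div_iff₀ hc]; nlinarith
  · rw [div_lt_iff₀ hc]; nlinarith

lemma artanh_tanh (x : ℝ) : artanh (Real.tanh x) = x := by
  have hc := Real.cosh_pos x
  have h1 : Real.cosh x + Real.sinh x = Real.exp x := Real.cosh_add_sinh x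
  have h2 : Real.cosh x - Real.sinh x = Real.exp (-x) := Real.cosh_sub_sinh x
  have key : (1 + Real.tanh x) / (1 - Real.tanh x) = Real.exp (2 * x) := by
    rw [Real.tanh_eq_sinh_div_cosh]
    have e1 : (1 : ℝ) + Real.sinh x / Real.cosh x = Real.exp x / Real.cosh x := by
      field_simp
      linarith
    have e2 : (1 : ℝ) - Real.sinh x / Real.cosh x = Real.exp (-x) / Real.cosh x := by
      field_simp
      linarith
    have e3 : Real.exp x / Real.cosh x / (Real.exp (-x) / Real.cosh x)
        = Real.exp x / Real.exp (-x) := by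
      field_simp
    rw [e1, e2, e3, ← Real.exp_sub]
    ring_nf
  rw [artanh, key, Real.log_exp]; ring

lemma artanh_strictMonoOn : StrictMonoOn artanh (Set.Ioo (-1 : ℝ) 1) := by
  intro x hx y hy hxy
  have hx1 : (0:ℝ) < 1 + x := by linarith [hx.1]
  have hx2 : (0:ℝ) < 1 - x := by linarith [hx.2]
  have hy1 : (0:ℝ) < 1 + y := by linarith [hy.1]
  have hy2 : (0:ℝ) < 1 - y := by linarith [hy.2]
  have h : (1 + x) / (1 - x) < (1 + y) / (1 - y) := by
    rw [div_lt_div_iff₀ hx2 hy2]; nlinarith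
  have := Real.log_lt_log (by positivity) h
  unfold artanh; linarith

lemma artanh_continuousOn : ContinuousOn artanh (Set.Ioo (-1 : ℝ) 1) := by
  unfold artanh
  apply ContinuousOn.div_const
  apply ContinuousOn.log
  · exact (continuousOn_const.add continuousOn_id).div
      (continuousOn_const.sub continuousOn_id)
      (fun x hx => by simp only [Set.mem_Ioo] at hx; intro h; linarith [hx.2, sub_eq_zero.mp h])
  · intro x hx
    simp only [Set.mem_Ioo] at hx
    exact ne_of_gt (div_pos (by linarith) (by linarith))

/-- the saturated Hamiltonian term is uniquely minimized at
v* = -β tanh(p/(2β)) (the closed-form optimal control law (15)). -/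
theorem hamiltonian_unique_minimizer (β p : ℝ) (hβ : 0 < β) :
    -β * Real.tanh (p / (2 * β)) ∈ Set.Ioo (-β) β ∧
      ∀ v ∈ Set.Ioo (-β) β, v ≠ -β * Real.tanh (p / (2 * β)) →
        (2 * β * ∫ t in (0:ℝ)..(-β * Real.tanh (p / (2 * β))), artanh (t / β))
            + p * (-β * Real.tanh (p / (2 * β)))
          < (2 * β * ∫ t in (0:ℝ)..v, artanh (t / β)) + p * v := by
  set T := Real.tanh (p / (2 * β)) with hT
  have hTm : T ∈ Set.Ioo (-1 : ℝ) 1 := tanh_mem_Ioo _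
  set vs : ℝ := -β * T with hvs
  have hvsm : vs ∈ Set.Ioo (-β) β := by
    constructor <;> [nlinarith [hTm.1, hTm.2]; nlinarith [hTm.1, hTm.2]]
  -- artanh (vs / β) = -(p / (2 * β))
  have hstat : artanh (vs / β) = -(p / (2 * β)) := by
    have : vs / β = Real.tanh (-(p / (2 * β))) := by
      rw [Real.tanh_neg, ← hT, hvs]; field_simp
    rw [this, artanh_tanh]
  set f : ℝ → ℝ := fun t => artanh (t / β) with hf
  have hmap : ∀ t ∈ Set.Ioo (-β) β, t / β ∈ Set.Ioo (-1 : ℝ) 1 := by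
    intro t ht
    constructor
    · rw [lt_div_iff₀ hβ]; linarith [ht.1]
    · rw [div_lt_one hβ]; exact ht.2
  have hfc : ContinuousOn f (Set.Ioo (-β) β) :=
    artanh_continuousOn.comp (continuousOn_id.div_const β) hmap
  have hfi : ∀ a ∈ Set.Ioo (-β) β, ∀ b ∈ Set.Ioo (-β) β,
      IntervalIntegrable f MeasureTheory.volume a b := by
    intro a ha b hb
    exact (hfc.mono (Set.ordConnected_Ioo.uIcc_subset ha hb)).intervalIntegrable
  set g : ℝ → ℝ := fun t => 2 * β * f t + p with hg
  have hgi : ∀ a ∈ Set.Ioo (-β) β, ∀ b ∈ Set.Ioo (-β) β,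
      IntervalIntegrable g MeasureTheory.volume a b := by
    intro a ha b hb
    exact ((hfi a ha b hb).const_mul _).add intervalIntegrable_const
  have h0 : (0 : ℝ) ∈ Set.Ioo (-β) β := ⟨by linarith, hβ⟩
  refine ⟨hvsm, ?_⟩
  intro v hv hne
  -- the difference equals the integral of g from vs to v
  have hdiff : (2 * β * ∫ t in (0:ℝ)..v, f t) + p * v
      - ((2 * β * ∫ t in (0:ℝ)..vs, f t) + p * vs) = ∫ t in vs..v, g t := by
    have hsub : (∫ t in (0:ℝ)..v, f t) - (∫ t in (0:ℝ)..vs, f t) = ∫ t in vs..v, f t :=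
      intervalIntegral.integral_interval_sub_left (hfi 0 h0 v hv) (hfi 0 h0 vs hvsm)
    have : (∫ t in vs..v, g t)
        = 2 * β * (∫ t in vs..v, f t) + (v - vs) * p := by
      rw [hg]
      rw [intervalIntegral.integral_add ((hfi vs hvsm v hv).const_mul _)
        intervalIntegrable_const, intervalIntegral.integral_const_mul,
        intervalIntegral.integral_const]
      simp
    rw [this, ← hsub]; ring
  rw [← sub_pos, hdiff]
  -- sign of g on either side of vs
  have hgsign : ∀ t ∈ Set.Ioo (-β) β, vs < t → 0 < g t := by
    intro t ht hlt
    have h1 : artanh (vs / β) < artanh (t / β) :=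
      artanh_strictMonoOn (hmap vs hvsm) (hmap t ht) (by gcongr)
    rw [hstat] at h1
    have : -p < 2 * β * artanh (t / β) := by
      have := mul_lt_mul_of_pos_left h1 (by linarith : (0:ℝ) < 2 * β)
      calc -p = 2 * β * (-(p / (2 * β))) := by field_simp
        _ < 2 * β * artanh (t / β) := this
    simp only [hg, hf]; linarith
  have hgsign' : ∀ t ∈ Set.Ioo (-β) β, t < vs → g t < 0 := by
    intro t ht hlt
    have h1 : artanh (t / β) < artanh (vs / β) :=
      artanh_strictMonoOn (hmap t ht) (hmap vs hvsm) (by gcongr)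
    rw [hstat] at h1
    have : 2 * β * artanh (t / β) < -p := by
      have := mul_lt_mul_of_pos_left h1 (by linarith : (0:ℝ) < 2 * β)
      calc 2 * β * artanh (t / β) < 2 * β * (-(p / (2 * β))) := this
        _ = -p := by field_simp
    simp only [hg, hf]; linarith
  rcases lt_or_gt_of_ne hne with hlt | hgt
  · -- v < vs
    have hpos : 0 < ∫ t in v..vs, (fun t => -g t) t := by
      apply intervalIntegral.intervalIntegral_pos_of_pos_on
        ((hgi v hv vs hvsm).neg)
      · intro x hx
        have hxm : x ∈ Set.Ioo (-β) β := ⟨lt_trans hv.1 hx.1, lt_trans hx.2 hvsm.2⟩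
        simpa using hgsign' x hxm hx.2
      · exact hlt
    rw [intervalIntegral.integral_neg] at hpos
    rw [intervalIntegral.integral_symm]
    linarith
  · -- vs < v
    apply intervalIntegral.intervalIntegral_pos_of_pos_on (hgi vs hvsm v hv)
    · intro x hx
      have hxm : x ∈ Set.Ioo (-β) β := ⟨lt_trans hvsm.1 hx.1, lt_trans hx.2 hv.2⟩
      exact hgsign x hxm hx.1
    · exact hgt
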